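/- Let x = (x_1,…,x_d) be a random vector and Y = f(x) square-integrable with Y measurable with respect to σ(x_1,…,x_d). Define two games: val(u) = Var(E[Y | x_u]) and val'(u) = E[Var(Y | x_{−u})], where −u denotes the complement of u in {1,…,d}, val(∅) = val'(∅) = 0, and Var(Y|G) denotes conditional variance. Then for every j, the Shapley value of player j computed from val equals the Shapley value of player j computed from val'. -/

import Mathlib

open Finset MeasureTheory ProbabilityTheory

/-- The Shapley value of player `j` for the cooperative game `val` on subsets of `Fin d`. -/
noncomputable def shapley {d : ℕ} (val : Finset (Fin d) → ℝ) (j : Fin d) : ℝ :=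
  (d : ℝ)⁻¹ * ∑ u ∈ (Finset.univ.erase j).powerset,
    ((Nat.choose (d - 1) u.card : ℝ))⁻¹ * (val (insert j u) - val u)

/-- The σ-algebra generated by the variables `x j`, `j ∈ u`. -/
def mGen {Ω : Type*} {d : ℕ} (x : Fin d → Ω → ℝ) (u : Finset (Fin d)) :
    MeasurableSpace Ω :=
  ⨆ j ∈ u, MeasurableSpace.comap (x j) Real.measurableSpace

/-- The conditional variance of `Y` given the σ-algebra `m`, as a function on `Ω`. -/
noncomputable def condVar {Ω : Type*} [MeasurableSpace Ω] (μ : Measure Ω)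
    (m : MeasurableSpace Ω) (Y : Ω → ℝ) : Ω → ℝ :=
  μ[fun ω => (Y ω - (μ[Y | m]) ω) ^ 2 | m]

section Aux

variable {Ω : Type*} {m : MeasurableSpace Ω} [m0 : MeasurableSpace Ω] {μ : Measure Ω}
  [IsProbabilityMeasure μ] {Y : Ω → ℝ}

/-- Product of two L² functions is integrable (via polarization). -/
lemma integrable_mul_of_memℒp_two {f g : Ω → ℝ} (hf : MemLp f 2 μ) (hg : MemLp g 2 μ) :
    Integrable (fun ω => f ω * g ω) μ := by
  have h : Integrable (fun ω =>
      (1 / 2 : ℝ) * (((f ω + g ω) ^ 2 - f ω ^ 2) - g ω ^ 2)) μ :=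
    (((hf.add hg).integrable_sq.sub hf.integrable_sq).sub hg.integrable_sq).const_mul _
  refine h.congr (Filter.Eventually.of_forall fun ω => ?_)
  ring

/-- The conditional expectation of an L² function is in L². -/
lemma memℒp_two_condexp (hm : m ≤ m0) (hY2 : MemLp Y 2 μ) : MemLp (μ[Y | m]) 2 μ := by
  haveI : SigmaFinite (μ.trim hm) := inferInstance
  set f : Lp ℝ 2 μ := hY2.toLp Y with hf
  have hae : (condExpL2 ℝ ℝ hm f : Ω → ℝ) =ᵐ[μ] μ[Y | m] := by
    refine ae_eq_condExp_of_forall_setIntegral_eq hm (hY2.integrable one_le_two)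
      (fun s _ hμs => integrableOn_condExpL2_of_measure_ne_top hm hμs.ne f)
      (fun s hs hμs => ?_) (aestronglyMeasurable_condExpL2 hm f)
    rw [integral_condExpL2_eq hm f hs hμs.ne]
    exact setIntegral_congr_ae (hm s hs) ((hY2.coeFn_toLp).mono fun ω hω _ => hω)
  exact (Lp.memLp (condExpL2 ℝ ℝ hm f : Lp ℝ 2 μ)).ae_eq hae

/-- Law of total variance (expectation form):
`E[Var(Y|m)] = Var(Y) - Var(E[Y|m])`. -/
lemma integral_condVar_eq (hm : m ≤ m0) (hY2 : MemLp Y 2 μ) :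
    ∫ ω, condVar μ m Y ω ∂μ = variance Y μ - variance (μ[Y | m]) μ := by
  haveI : SigmaFinite (μ.trim hm) := inferInstance
  set Z : Ω → ℝ := μ[Y | m] with hZ
  have hZ2 : MemLp Z 2 μ := memℒp_two_condexp hm hY2
  have hYi : Integrable Y μ := hY2.integrable one_le_two
  have hZi : Integrable Z μ := integrable_condExp
  have hYZ : Integrable (fun ω => Y ω * Z ω) μ := integrable_mul_of_memℒp_two hY2 hZ2
  have hZY : Integrable (Z * Y) μ := by
    refine hYZ.congr (Filter.Eventually.of_forall fun ω => ?_)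
    simp [mul_comm]
  have hsq : Integrable (fun ω => (Y ω - Z ω) ^ 2) μ := (hY2.sub hZ2).integrable_sq
  -- ∫ Y*Z = ∫ Z^2
  have key : ∫ ω, Y ω * Z ω ∂μ = ∫ ω, Z ω ^ 2 ∂μ := by
    have hpull : μ[Z * Y | m] =ᵐ[μ] Z * μ[Y | m] :=
      condExp_mul_of_stronglyMeasurable_left stronglyMeasurable_condExp hZY hYi
    calc ∫ ω, Y ω * Z ω ∂μ = ∫ ω, (Z * Y) ω ∂μ := by
          refine integral_congr_ae (Filter.Eventually.of_forall fun ω => ?_)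
          simp [mul_comm]
      _ = ∫ ω, (μ[Z * Y | m]) ω ∂μ := (integral_condExp hm).symm
      _ = ∫ ω, (Z * μ[Y | m]) ω ∂μ := integral_congr_ae hpull
      _ = ∫ ω, Z ω ^ 2 ∂μ := by
          refine integral_congr_ae (Filter.Eventually.of_forall fun ω => ?_)
          simp [hZ, sq]
  -- ∫ condVar = ∫ (Y - Z)^2
  have h1 : ∫ ω, condVar μ m Y ω ∂μ = ∫ ω, (Y ω - Z ω) ^ 2 ∂μ := by
    unfold _root_.condVar
    exact integral_condExp hm
  have h2 : ∫ ω, (Y ω - Z ω) ^ 2 ∂μ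
      = ∫ ω, Y ω ^ 2 ∂μ - 2 * ∫ ω, Y ω * Z ω ∂μ + ∫ ω, Z ω ^ 2 ∂μ := by
    have e0 : ∫ ω, (Y ω - Z ω) ^ 2 ∂μ
        = ∫ ω, (Y ω ^ 2 - 2 * (Y ω * Z ω) + Z ω ^ 2) ∂μ := by
      refine integral_congr_ae (Filter.Eventually.of_forall fun ω => ?_)
      ring
    have e1 : ∫ ω, (Y ω ^ 2 - 2 * (Y ω * Z ω) + Z ω ^ 2) ∂μ
        = ∫ ω, (Y ω ^ 2 - 2 * (Y ω * Z ω)) ∂μ + ∫ ω, Z ω ^ 2 ∂μ :=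
      integral_add (hY2.integrable_sq.sub (hYZ.const_mul 2)) hZ2.integrable_sq
    have e2 : ∫ ω, (Y ω ^ 2 - 2 * (Y ω * Z ω)) ∂μ
        = ∫ ω, Y ω ^ 2 ∂μ - ∫ ω, 2 * (Y ω * Z ω) ∂μ :=
      integral_sub hY2.integrable_sq (hYZ.const_mul 2)
    have e3 : ∫ ω, 2 * (Y ω * Z ω) ∂μ = 2 * ∫ ω, Y ω * Z ω ∂μ :=
      integral_const_mul 2 _
    rw [e0, e1, e2, e3]
  have hEZ : ∫ ω, Z ω ∂μ = ∫ ω, Y ω ∂μ := integral_condExp hm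
  have hvY : variance Y μ = ∫ ω, Y ω ^ 2 ∂μ - (∫ ω, Y ω ∂μ) ^ 2 := by
    simpa [sq] using variance_eq_sub hY2
  have hvZ : variance Z μ = ∫ ω, Z ω ^ 2 ∂μ - (∫ ω, Z ω ∂μ) ^ 2 := by
    simpa [sq] using variance_eq_sub hZ2
  rw [h1, h2, key, hvY, hvZ, hEZ]
  ring

end Aux

/-- The Shapley values of the game `val u = Var(E[Y ∣ x_u])` coincide with those of
the dual game `val' u = E[Var(Y ∣ x_{-u})]`. -/
theorem shapley_var_condexp_eq_shapley_expected_condVar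
    {Ω : Type*} [m0 : MeasurableSpace Ω] (μ : Measure Ω) [IsProbabilityMeasure μ]
    (d : ℕ) (x : Fin d → Ω → ℝ) (hx : ∀ j, Measurable (x j))
    (Y : Ω → ℝ) (hY2 : MemLp Y 2 μ)
    (hYmeas : Measurable[mGen x Finset.univ] Y) (j : Fin d) :
    shapley (fun u => variance (μ[Y | mGen x u]) μ) j
      = shapley (fun u => ∫ ω, condVar μ (mGen x uᶜ) Y ω ∂μ) j := by
  have hm : ∀ u : Finset (Fin d), mGen x u ≤ m0 := fun u => by
    refine iSup₂_le fun i _ => ?_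
    exact (hx i).comap_le
  set val : Finset (Fin d) → ℝ := fun u => variance (μ[Y | mGen x u]) μ with hval
  have hdual : ∀ u : Finset (Fin d),
      ∫ ω, condVar μ (mGen x uᶜ) Y ω ∂μ = variance Y μ - val uᶜ :=
    fun u => integral_condVar_eq (hm uᶜ) hY2
  unfold shapley
  congr 1
  simp only [hdual]
  refine Finset.sum_nbij' (fun u => (Finset.univ.erase j) \ u)
    (fun u => (Finset.univ.erase j) \ u) ?_ ?_ ?_ ?_ ?_
  · intro u hu
    exact Finset.mem_powerset.2 (Finset.sdiff_subset)
  · intro u hu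
    exact Finset.mem_powerset.2 (Finset.sdiff_subset)
  · intro u hu
    exact Finset.sdiff_sdiff_eq_self (Finset.mem_powerset.1 hu)
  · intro u hu
    exact Finset.sdiff_sdiff_eq_self (Finset.mem_powerset.1 hu)
  · intro u hu
    have husub : u ⊆ Finset.univ.erase j := Finset.mem_powerset.1 hu
    have hju : j ∉ u := fun h => (Finset.mem_erase.1 (husub h)).1 rfl
    have hcard : ((Finset.univ.erase j) \ u).card = (d - 1) - u.card := by
      rw [Finset.card_sdiff_of_subset husub, Finset.card_erase_of_mem (Finset.mem_univ j),
        Finset.card_univ, Fintype.card_fin]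
    have hle : u.card ≤ d - 1 := by
      have := Finset.card_le_card husub
      rwa [Finset.card_erase_of_mem (Finset.mem_univ j), Finset.card_univ,
        Fintype.card_fin] at this
    have hchoose : ((d - 1).choose (((Finset.univ.erase j) \ u).card) : ℝ)
        = ((d - 1).choose u.card : ℝ) := by
      rw [hcard]
      exact_mod_cast Nat.choose_symm hle
    have hins : insert j ((Finset.univ.erase j) \ u) = uᶜ := by
      ext i
      by_cases hij : i = j
      · simp [hij, hju]
      · simp [hij, Finset.mem_sdiff, Finset.mem_erase]
    have e1 : (insert j ((Finset.univ.erase j) \ u))ᶜ = u := by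
      rw [hins, compl_compl]
    have e2 : ((Finset.univ.erase j) \ u)ᶜ = insert j u := by
      ext i
      by_cases hij : i = j
      · simp [hij]
      · simp [hij, Finset.mem_sdiff, Finset.mem_erase]
    simp only [hchoose, e1, e2]
    ring
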